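/- Let R and S be commutative rings and let f : R →+* S be a ring homomorphism making S a flat R-module. Consider the adjunction F ⊣ G where F = S ⊗_R − : ModuleCat R ⥤ ModuleCat S is extension of scalars along f and G = restriction of scalars along f, and let T be the comonad on ModuleCat S induced by this adjunction. Then the comparison functor Φ : ModuleCat R ⥤ Coalg(T) is an equivalence of categories if and only if S is a faithfully flat R-module. (This is the affine case of the paper's Theorem on abelian descent: for a flat morphism p : X → S of schemes, qcoh(X)/p ≃ qcoh(S) iff p is strictly flat.) -/

import Mathlib

open CategoryTheory

universe u

open CategoryTheory Limits

namespace DescentAux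

variable {R S : Type u} [CommRing R] [CommRing S] (f : R →+* S)

noncomputable abbrev Sr : ModuleCat R := (ModuleCat.restrictScalars f).obj (ModuleCat.of S S)

instance : (ModuleCat.extendScalars.{u,u} f).Additive where
  map_add {M N g h} := by
    apply ModuleCat.hom_ext; apply LinearMap.ext; intro x
    show ((ModuleCat.extendScalars f).map (g + h)).hom x
      = ((ModuleCat.extendScalars f).map g).hom x + ((ModuleCat.extendScalars f).map h).hom x
    induction x using TensorProduct.induction_on with
    | zero => erw [map_zero]; rw [add_zero]
    | tmul s m =>
        show s ⊗ₜ (g + h) m = s ⊗ₜ g m + s ⊗ₜ h m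
        show s ⊗ₜ (g.hom + h.hom) m = s ⊗ₜ g.hom m + s ⊗ₜ h.hom m
        rw [LinearMap.add_apply]; exact TensorProduct.tmul_add _ _ _
    | add x y hx hy => erw [map_add, map_add, map_add, hx, hy]; abel

lemma preservesFL (hflat : @Module.Flat R S _ _ f.toModule) :
    PreservesFiniteLimits (ModuleCat.extendScalars.{u,u} f) := by
  haveI : Module.Flat R ↑(Sr f) := hflat
  have tfae := (ModuleCat.extendScalars.{u,u} f).preservesFiniteLimits_tfae
  refine (tfae.out 1 3).mp ?_
  rintro C ⟨hC, hmono⟩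
  rw [ModuleCat.mono_iff_injective] at hmono
  rw [ShortComplex.ShortExact.moduleCat_exact_iff_function_exact C] at hC
  constructor
  · rw [ShortComplex.ShortExact.moduleCat_exact_iff_function_exact (C.map (ModuleCat.extendScalars.{u,u} f))]
    exact (Module.Flat.lTensor_exact (↑(Sr f)) hC :
      Function.Exact ⇑(LinearMap.lTensor (↑(Sr f)) (C.f.hom : C.X₁ →ₗ[R] C.X₂))
        ⇑(LinearMap.lTensor (↑(Sr f)) (C.g.hom : C.X₂ →ₗ[R] C.X₃)))
  · rw [ModuleCat.mono_iff_injective]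
    exact (Module.Flat.lTensor_preserves_injective_linearMap
      (M := ↑(Sr f)) (C.f.hom : C.X₁ →ₗ[R] C.X₂) hmono :
      Function.Injective ⇑(LinearMap.lTensor (↑(Sr f)) (C.f.hom : C.X₁ →ₗ[R] C.X₂)))

lemma reflectsIso (hff : @Module.FaithfullyFlat R S _ _ f.toModule) :
    (ModuleCat.extendScalars.{u,u} f).ReflectsIsomorphisms := by
  haveI : Module.FaithfullyFlat R ↑(Sr f) := hff
  constructor
  intro M N g hiso
  rw [ConcreteCategory.isIso_iff_bijective] at hiso ⊢
  have hbij : Function.Bijective ⇑(LinearMap.lTensor (↑(Sr f)) (g.hom : M →ₗ[R] N)) := hiso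
  constructor
  · -- injectivity
    have hex : Function.Exact
        ⇑(LinearMap.lTensor (↑(Sr f)) (0 : (PUnit.{u+1} →₀ R) →ₗ[R] M))
        ⇑(LinearMap.lTensor (↑(Sr f)) (g.hom : M →ₗ[R] N)) := by
      intro y
      constructor
      · intro hy
        exact ⟨0, by rw [map_zero]; exact (hbij.1 (by rw [hy, map_zero])).symm⟩
      · rintro ⟨x, rfl⟩
        rw [LinearMap.lTensor_zero]
        simp
    have := Module.FaithfullyFlat.lTensor_reflects_exact R (↑(Sr f)) _ _ hex
    intro a b hab
    have hab' : (g.hom : M →ₗ[R] N) a = g b := hab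
    have h0 : (g.hom : M →ₗ[R] N) (a - b) = 0 := by
      rw [map_sub, hab', sub_self]
    obtain ⟨x, hx⟩ := (this (a - b)).mp h0
    rw [LinearMap.zero_apply] at hx
    exact sub_eq_zero.mp hx.symm
  · -- surjectivity
    have hex : Function.Exact
        ⇑(LinearMap.lTensor (↑(Sr f)) (g.hom : M →ₗ[R] N))
        ⇑(LinearMap.lTensor (↑(Sr f)) (0 : N →ₗ[R] (PUnit.{u+1} →₀ R))) := by
      intro y
      constructor
      · intro _
        exact hbij.2 y
      · intro _
        rw [LinearMap.lTensor_zero, LinearMap.zero_apply]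
    have := Module.FaithfullyFlat.lTensor_reflects_exact R (↑(Sr f)) _ _ hex
    intro y
    exact (this y).mp rfl

end DescentAux

open CategoryTheory

/-- Affine case of abelian cohomological descent: for a ring homomorphism `f : R →+* S`
making `S` a flat `R`-module, the comparison functor from `ModuleCat R` to the category of
coalgebras over the comonad on `ModuleCat S` induced by the extension/restriction of scalars
adjunction is an equivalence iff `S` is a faithfully flat `R`-module. -/
theorem comparison_isEquivalence_iff_faithfullyFlat
    {R S : Type u} [CommRing R] [CommRing S] (f : R →+* S)
    (hflat : @Module.Flat R S _ _ f.toModule) :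
    (Comonad.comparison (ModuleCat.extendRestrictScalarsAdj.{u, u, u} f)).IsEquivalence ↔
      @Module.FaithfullyFlat R S _ _ f.toModule := by
  letI := f.toModule
  constructor
  · intro heqv
    haveI := heqv
    haveI : (ModuleCat.extendScalars.{u,u} f).Faithful :=
      Functor.Faithful.of_iso
        (Comonad.comparisonForget (ModuleCat.extendRestrictScalarsAdj.{u,u,u} f))
    refine (Module.FaithfullyFlat.iff_flat_and_lTensor_reflects_triviality R S).mpr
      ⟨hflat, fun N _ _ hsub => ?_⟩
    haveI : Subsingleton
        ↑((ModuleCat.extendScalars.{u,u} f).obj (ModuleCat.of R N)) := hsub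
    have hz : (𝟙 (ModuleCat.of R N) : ModuleCat.of R N ⟶ ModuleCat.of R N) = 0 :=
      (ModuleCat.extendScalars.{u,u} f).map_injective
        (ModuleCat.hom_ext (LinearMap.ext fun x => Subsingleton.elim _ _))
    refine ⟨fun a b => ?_⟩
    have ha : a = 0 := DFunLike.congr_fun (congrArg ModuleCat.Hom.hom hz) a
    have hb : b = 0 := DFunLike.congr_fun (congrArg ModuleCat.Hom.hom hz) b
    rw [ha, hb]
  · intro hff
    haveI := DescentAux.preservesFL f hflat
    haveI := DescentAux.reflectsIso f hff
    haveI : Comonad.PreservesLimitOfIsCoreflexivePair (ModuleCat.extendScalars.{u,u} f) :=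
      ⟨fun g h _ => inferInstance⟩
    exact (Comonad.comonadicOfHasPreservesCoreflexiveEqualizersOfReflectsIsomorphisms
      (ModuleCat.extendRestrictScalarsAdj.{u,u,u} f)).eqv
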